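/- Let A be a unital simple C*-algebra with T(A) ≠ ∅, let X be a compact metric space, and let φ : C(X) → A be a unital injective *-homomorphism. Then there is an increasing function Δ : (0, 1) → (0, 1) with lim_{r→0} Δ(r) = 0 such that μ_{τ∘φ}(O) ≥ Δ(r) for every τ ∈ T(A) and every open metric ball O ⊆ X of radius r ∈ (0, 1). -/

import Mathlib

open scoped ENNReal
open Metric Set
open scoped ComplexOrder

/-- Cuntz subequivalence of elements of a C*-algebra. -/
def CuntzLE {A : Type*} [CStarAlgebra A] (a b : A) : Prop :=
  ∃ x : ℕ → A,
    Filter.Tendsto (fun n => ‖star (x n) * b * x n - a‖) Filter.atTop (nhds 0)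

/-- Cuntz equivalence. -/
def CuntzEquiv {A : Type*} [CStarAlgebra A] (a b : A) : Prop :=
  CuntzLE a b ∧ CuntzLE b a

/-- A unital C*-algebra has stable rank one if invertibles are dense. -/
def HasStableRankOne (A : Type*) [CStarAlgebra A] : Prop :=
  Dense {a : A | IsUnit a}

/-- A C*-algebra is simple if its only closed two-sided ideals are trivial. -/
def IsSimpleCStarAlgebra (A : Type*) [CStarAlgebra A] : Prop :=
  ∀ I : TwoSidedIdeal A, IsClosed (I : Set A) → I = ⊥ ∨ I = ⊤

/-- The canonical continuous `[0,1]`-valued function supported exactly on the open set `O`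
(equal to `1` when `O` is the whole space). -/
noncomputable def fO {Ω : Type*} [MetricSpace Ω] (O : Set Ω) : C(Ω, ℂ) :=
  haveI := Classical.dec (O = Set.univ)
  if O = Set.univ then 1 else
    ⟨fun t => (↑(min 1 (infDist t Oᶜ)) : ℂ),
      Complex.continuous_ofReal.comp
        (continuous_const.min (continuous_infDist_pt Oᶜ))⟩

/-- The distance `D_c` between two unital homomorphisms `C(Ω) → A`. -/
noncomputable def Dc {A : Type*} [CStarAlgebra A] {Ω : Type*} [MetricSpace Ω]
    (φ ψ : C(Ω, ℂ) →⋆ₐ[ℂ] A) : ℝ≥0∞ :=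
  ⨆ (O : Set Ω) (_ : IsOpen O),
    ⨅ (d : ℝ) (_ : 0 < d)
      (_ : CuntzLE (φ (fO O)) (ψ (fO (thickening d O)))), ENNReal.ofReal d

/-- Tracial states, as linear functionals. -/
structure IsTracialState {A : Type*} [CStarAlgebra A] (τ : A →ₗ[ℂ] ℂ) : Prop where
  map_one : τ 1 = 1
  nonneg : ∀ a : A, 0 ≤ τ (star a * a)
  tracial : ∀ a b : A, τ (a * b) = τ (b * a)

/-- The function `f_ε` used in the definition of `d_τ`. -/
noncomputable def cutoff (ε : ℝ) : ℝ → ℝ := fun t => min 1 (max ((2 / ε) * t - 1) 0)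

/-- `d_τ(b) = lim_{ε → 0⁺} τ(f_ε(b)) = sup_{ε > 0} τ(f_ε(b))`. -/
noncomputable def dTau {A : Type*} [CStarAlgebra A] (τ : A →ₗ[ℂ] ℂ) (b : A) : ℝ :=
  ⨆ ε : {ε : ℝ // 0 < ε}, (τ (cfc (cutoff ε.1) b)).re

/-- Strict comparison for positive elements. -/
def StrictComparison (A : Type*) [CStarAlgebra A] [PartialOrder A] [StarOrderedRing A] : Prop :=
  ∀ a b : A, 0 ≤ a → 0 ≤ b →
    (∀ τ : A →ₗ[ℂ] ℂ, IsTracialState τ → dTau τ a < dTau τ b) → CuntzLE a b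

/-- A unital homomorphism `C(Ω) → A` has spectrum `X`. -/
def HomSpectrum {A : Type*} [CStarAlgebra A] {Ω : Type*} [MetricSpace Ω]
    (φ : C(Ω, ℂ) →⋆ₐ[ℂ] A) (X : Set Ω) : Prop :=
  ∀ f : C(Ω, ℂ), φ f = 0 ↔ ∀ t ∈ X, f t = 0

section dist
variable {A : Type*} [CStarAlgebra A] {Ω : Type*} [MetricSpace Ω]

/-- `r_O(φ, ψ)`. -/
noncomputable def rOfun (φ ψ : C(Ω, ℂ) →⋆ₐ[ℂ] A) (O : Set Ω) : ℝ≥0∞ :=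
  ⨅ (r : ℝ) (_ : 0 < r)
    (_ : ∀ τ : A →ₗ[ℂ] ℂ, IsTracialState τ →
      dTau τ (φ (fO O)) ≤ dTau τ (ψ (fO (thickening r O)))), ENNReal.ofReal r

/-- `D_T(φ, ψ)`. -/
noncomputable def DT (φ ψ : C(Ω, ℂ) →⋆ₐ[ℂ] A) : ℝ≥0∞ :=
  ⨆ (O : Set Ω) (_ : IsOpen O), rOfun φ ψ O

/-- `r_O⁺(φ, ψ)`. -/
noncomputable def rOplus (φ ψ : C(Ω, ℂ) →⋆ₐ[ℂ] A) (O : Set Ω) : ℝ≥0∞ :=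
  ⨅ (r : ℝ) (_ : 0 < r)
    (_ : ∀ τ : A →ₗ[ℂ] ℂ, IsTracialState τ →
      dTau τ (φ (fO O)) < dTau τ (ψ (fO (thickening r O)))), ENNReal.ofReal r

/-- `a(φ, ψ) = sup {dist(ζ, X) : ζ ∈ Y}`. -/
noncomputable def aSup (X Y : Set Ω) : ℝ≥0∞ :=
  ⨆ ζ ∈ Y, ENNReal.ofReal (infDist ζ X)

/-- `D^T(φ, ψ)`, where `X`, `Y` are the spectra of `φ`, `ψ`. -/
noncomputable def DTup (φ ψ : C(Ω, ℂ) →⋆ₐ[ℂ] A) (X Y : Set Ω) : ℝ≥0∞ :=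
  max (aSup X Y) (⨆ (O : Set Ω) (_ : IsOpen O) (_ : O ∩ X ≠ X), rOplus φ ψ O)

/-- `δ_T(φ, ψ)` (over open metric balls). -/
noncomputable def deltaT (φ ψ : C(Ω, ℂ) →⋆ₐ[ℂ] A) : ℝ≥0∞ :=
  ⨅ (r : ℝ) (_ : 0 < r)
    (_ : ∀ (c : Ω) (d : ℝ) (τ : A →ₗ[ℂ] ℂ), IsTracialState τ →
      dTau τ (φ (fO (ball c d))) ≤ dTau τ (ψ (fO (thickening r (ball c d))))),
    ENNReal.ofReal r

/-- `d_T(φ, ψ)`. -/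
noncomputable def dTdist (φ ψ : C(Ω, ℂ) →⋆ₐ[ℂ] A) : ℝ≥0∞ :=
  max (deltaT φ ψ) (deltaT ψ φ)

/-- `δ_c(φ, ψ)` (over open metric balls). -/
noncomputable def deltaC (φ ψ : C(Ω, ℂ) →⋆ₐ[ℂ] A) : ℝ≥0∞ :=
  ⨅ (r : ℝ) (_ : 0 < r)
    (_ : ∀ (c : Ω) (d : ℝ),
      CuntzLE (φ (fO (ball c d))) (ψ (fO (thickening r (ball c d))))),
    ENNReal.ofReal r

/-- `d_c(φ, ψ)`. -/
noncomputable def dCdist (φ ψ : C(Ω, ℂ) →⋆ₐ[ℂ] A) : ℝ≥0∞ :=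
  max (deltaC φ ψ) (deltaC ψ φ)

end dist

section normal
variable {A : Type*} [CStarAlgebra A]

/-- The closure of the unitary orbit of `x`. -/
def uOrbit (x : A) : Set A :=
  closure {y : A | ∃ u : unitary A, y = star (u : A) * x * (u : A)}

/-- The distance between the closures of the unitary orbits of `x` and `y`. -/
noncomputable def orbitDist (x y : A) : ℝ :=
  sInf {d : ℝ | ∃ a ∈ uOrbit x, ∃ b ∈ uOrbit y, d = ‖a - b‖}

/-- The homomorphism `C(sp(x) ∪ sp(y)) → A`, `f ↦ f(x)`, for a normal element `x`. -/
noncomputable def normalHomL (x y : A) (hx : IsStarNormal x) :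
    C((spectrum ℂ x ∪ spectrum ℂ y : Set ℂ), ℂ) →⋆ₐ[ℂ] A :=
  cfcHomSuperset hx Set.subset_union_left

/-- The homomorphism `C(sp(x) ∪ sp(y)) → A`, `f ↦ f(y)`, for a normal element `y`. -/
noncomputable def normalHomR (x y : A) (hy : IsStarNormal y) :
    C((spectrum ℂ x ∪ spectrum ℂ y : Set ℂ), ℂ) →⋆ₐ[ℂ] A :=
  cfcHomSuperset hy Set.subset_union_right

/-- Projections. -/
def IsProjection (p : A) : Prop := IsSelfAdjoint p ∧ IsIdempotentElem p

/-- Murray–von Neumann equivalence. -/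
def MvNEquiv (p q : A) : Prop := ∃ v : A, star v * v = p ∧ v * star v = q

/-- The hereditary C*-subalgebra generated by `a`, as a set. -/
def herGen (a : A) : Set A := closure {x : A | ∃ y : A, x = a * y * a}

/-- Connected component of `1` in the invertibles. -/
def Inv0 (A : Type*) [CStarAlgebra A] : Set A :=
  connectedComponentIn {a : A | IsUnit a} 1

end normal

/-- AF algebra. -/
def IsAF (A : Type*) [CStarAlgebra A] : Prop :=
  ∀ (F : Finset A) (ε : ℝ), 0 < ε →
    ∃ B : StarSubalgebra ℂ A, FiniteDimensional ℂ B ∧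
      ∀ a ∈ F, infDist a (B : Set A) < ε

/-- Tracial rank zero. -/
def TracialRankZero (A : Type*) [CStarAlgebra A] [PartialOrder A] [StarOrderedRing A] : Prop :=
  ∀ (ε : ℝ), 0 < ε → ∀ (F : Finset A) (a : A), 0 ≤ a → a ≠ 0 →
    ∃ (B : StarSubalgebra ℂ A) (p : A),
      FiniteDimensional ℂ B ∧ IsProjection p ∧ p ∈ B ∧
      (∀ b ∈ B, p * b = b ∧ b * p = b) ∧
      (∀ c ∈ F, ‖p * c - c * p‖ < ε ∧ infDist (p * c * p) (B : Set A) < ε) ∧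
      ∃ q : A, IsProjection q ∧ q ∈ herGen a ∧ MvNEquiv (1 - p) q

/-- `ρ₁(x, y)`. -/
noncomputable def rho1 {A : Type*} [CStarAlgebra A] (x y : A) : ℝ :=
  sSup {r : ℝ | ∃ lam : ℂ, lam ∉ spectrum ℂ x ∪ spectrum ℂ y ∧
    (algebraMap ℂ A lam - x) * Ring.inverse (algebraMap ℂ A lam - y) ∉ Inv0 A ∧
    r = infDist lam (spectrum ℂ x) + infDist lam (spectrum ℂ y)}


section auxProof

open Metric MeasureTheory

variable {A : Type*} [CStarAlgebra A]

lemma aux_one_mem_closure_span (hA : IsSimpleCStarAlgebra A) {b : A} (hb0 : b ≠ 0) :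
    (1 : A) ∈ closure (Submodule.span ℂ {z : A | ∃ x y : A, z = x * b * y} : Set A) := by
  set S : Set A := {z : A | ∃ x y : A, z = x * b * y}
  set M : Submodule ℂ A := Submodule.span ℂ S
  have hmulL : ∀ x z : A, z ∈ M → x * z ∈ M := by
    intro x z hz
    induction hz using Submodule.span_induction with
    | mem w hw => obtain ⟨p, q, rfl⟩ := hw; exact Submodule.subset_span ⟨x * p, q, by noncomm_ring⟩
    | zero => simpa using Submodule.zero_mem M
    | add w₁ w₂ _ _ h1 h2 => rw [mul_add]; exact Submodule.add_mem M h1 h2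
    | smul c w _ h => rw [mul_smul_comm]; exact Submodule.smul_mem M c h
  have hmulR : ∀ x z : A, z ∈ M → z * x ∈ M := by
    intro x z hz
    induction hz using Submodule.span_induction with
    | mem w hw => obtain ⟨p, q, rfl⟩ := hw; exact Submodule.subset_span ⟨p, q * x, by noncomm_ring⟩
    | zero => simpa using Submodule.zero_mem M
    | add w₁ w₂ _ _ h1 h2 => rw [add_mul]; exact Submodule.add_mem M h1 h2
    | smul c w _ h => rw [smul_mul_assoc]; exact Submodule.smul_mem M c h
  set C : Set A := closure (M : Set A)
  have hCadd : ∀ {x y : A}, x ∈ C → y ∈ C → x + y ∈ C := by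
    intro x y hx hy
    exact map_mem_closure₂ continuous_add hx hy (fun a ha c hc => M.add_mem ha hc)
  have hCneg : ∀ {x : A}, x ∈ C → -x ∈ C := fun hx =>
    map_mem_closure continuous_neg hx (fun a ha => M.neg_mem ha)
  have hCL : ∀ {x y : A}, y ∈ C → x * y ∈ C := fun {x y} hy =>
    map_mem_closure (f := (x * ·)) (continuous_mul_left x) hy (fun a ha => hmulL x a ha)
  have hCR : ∀ {x y : A}, x ∈ C → x * y ∈ C := fun {x y} hx =>
    map_mem_closure (f := (· * y)) (continuous_mul_right y) hx (fun a ha => hmulR y a ha)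
  have hC0 : (0 : A) ∈ C := subset_closure (M.zero_mem)
  set I : TwoSidedIdeal A := TwoSidedIdeal.mk' C hC0 hCadd hCneg hCL hCR
  have hImem : ∀ x : A, x ∈ I ↔ x ∈ C := fun x => TwoSidedIdeal.mem_mk' C _ _ _ _ _ x
  have hIclosed : IsClosed (I : Set A) := by
    have : (I : Set A) = C := TwoSidedIdeal.coe_mk' C _ _ _ _ _
    rw [this]; exact isClosed_closure
  have hbI : b ∈ I := (hImem b).mpr (subset_closure (Submodule.subset_span ⟨1, 1, by simp⟩))
  rcases hA I hIclosed with h | h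
  · rw [h] at hbI
    exact absurd (by simpa using hbI) hb0
  · exact (hImem 1).mp (h ▸ trivial)

variable [PartialOrder A] [StarOrderedRing A]

lemma aux_alg_nonneg (t : ℝ) (ht : 0 ≤ t) : 0 ≤ algebraMap ℝ A t := by
  have h2 : star (algebraMap ℝ A (Real.sqrt t)) = algebraMap ℝ A (Real.sqrt t) := by
    simp [Algebra.algebraMap_eq_smul_one, star_smul]
  have : algebraMap ℝ A t = star (algebraMap ℝ A (Real.sqrt t)) * algebraMap ℝ A (Real.sqrt t) := by
    rw [h2, ← map_mul, Real.mul_self_sqrt ht]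
  rw [this]; exact star_mul_self_nonneg _

lemma aux_trace_nonneg {τ : A →ₗ[ℂ] ℂ} (hτ : IsTracialState τ) {a : A} (ha : 0 ≤ a) :
    0 ≤ (τ a).re := by
  have h1 : star (CFC.sqrt a) * CFC.sqrt a = a := by
    rw [(IsSelfAdjoint.of_nonneg (CFC.sqrt_nonneg _)).star_eq, CFC.sqrt_mul_sqrt_self a ha]
  have := hτ.nonneg (CFC.sqrt a)
  rw [h1] at this
  exact (Complex.le_def.mp this).1

lemma aux_trace_mono {τ : A →ₗ[ℂ] ℂ} (hτ : IsTracialState τ) {a b : A} (hab : a ≤ b) :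
    (τ a).re ≤ (τ b).re := by
  have h : 0 ≤ (τ (b - a)).re := aux_trace_nonneg hτ (sub_nonneg.mpr hab)
  rw [map_sub, Complex.sub_re] at h; linarith

lemma aux_trace_smul_re (τ : A →ₗ[ℂ] ℂ) (t : ℝ) (b : A) : (τ (t • b)).re = t * (τ b).re := by
  rw [← smul_one_smul ℂ t b, LinearMap.map_smul]; simp

lemma aux_trace_one_re {τ : A →ₗ[ℂ] ℂ} (hτ : IsTracialState τ) : (τ 1).re = 1 := by
  rw [hτ.map_one]; simp

lemma aux_trace_conj_le {τ : A →ₗ[ℂ] ℂ} (hτ : IsTracialState τ) {b : A} (hb : 0 ≤ b) (u : A) :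
    (τ (star u * b * u)).re ≤ ‖u‖^2 * (τ b).re := by
  set s := CFC.sqrt b with hs
  have hssa : star s = s := (IsSelfAdjoint.of_nonneg (CFC.sqrt_nonneg _)).star_eq
  have hss : s * s = b := CFC.sqrt_mul_sqrt_self b hb
  have h1 : star u * b * u = (star u * s) * (s * u) := by rw [← hss]; noncomm_ring
  have h2 : τ (star u * b * u) = τ (s * (u * star u) * s) := by
    rw [h1, hτ.tracial]; congr 1; noncomm_ring
  have h3 : s * (u * star u) * s ≤ ‖u‖^2 • b := by
    have := star_left_conjugate_le_conjugate (CStarAlgebra.mul_star_le_algebraMap_norm_sq (a := u)) s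
    rw [hssa] at this
    refine this.trans_eq ?_
    rw [Algebra.algebraMap_eq_smul_one,
      show s * (‖u‖^2 • (1:A)) * s = ‖u‖^2 • (s * s) by
        rw [mul_smul_comm, smul_mul_assoc, mul_one], hss]
  calc (τ (star u * b * u)).re = (τ (s * (u * star u) * s)).re := by rw [h2]
    _ ≤ (τ (‖u‖^2 • b)).re := aux_trace_mono hτ h3
    _ = ‖u‖^2 * (τ b).re := aux_trace_smul_re τ _ b

lemma aux_key_ineq {b : A} (hb : 0 ≤ b) (u v : A) :
    star u * b * v + star v * b * u ≤ star u * b * u + star v * b * v := by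
  set s := CFC.sqrt b with hs
  have hssa : star s = s := (IsSelfAdjoint.of_nonneg (CFC.sqrt_nonneg _)).star_eq
  have hss : s * s = b := CFC.sqrt_mul_sqrt_self b hb
  have h := star_mul_self_nonneg (s * u - s * v)
  have hexp : star (s * u - s * v) * (s * u - s * v)
      = (star u * b * u + star v * b * v) - (star u * b * v + star v * b * u) := by
    rw [← hss]; simp only [star_sub, star_mul, hssa]; noncomm_ring
  rw [hexp] at h
  exact sub_nonneg.mp h

lemma aux_uniform_trace_pos (hA : IsSimpleCStarAlgebra A) {b : A} (hb : 0 ≤ b) (hb0 : b ≠ 0) :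
    ∃ K : ℝ, 0 < K ∧ ∀ τ : A →ₗ[ℂ] ℂ, IsTracialState τ → K ≤ (τ b).re := by
  have hbsa : star b = b := (IsSelfAdjoint.of_nonneg hb).star_eq
  obtain ⟨a, haS, hd⟩ := Metric.mem_closure_iff.mp (aux_one_mem_closure_span hA hb0)
    (1/2) (by norm_num)
  rw [dist_eq_norm] at hd
  obtain ⟨n, f, g, hsum⟩ := Submodule.mem_span_set'.mp haS
  choose xs ys hxy using fun i => (g i).2
  set u : Fin n → A := fun i => star (f i • xs i) with hu
  set v : Fin n → A := fun i => ys i with hv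
  have ha_eq : a = ∑ i, star (u i) * b * v i := by
    rw [← hsum]
    refine Finset.sum_congr rfl fun i _ => ?_
    rw [hxy i]
    simp only [hu, hv, star_star, smul_mul_assoc]
  set M : ℝ := ∑ i, (‖u i‖^2 + ‖v i‖^2) with hM
  have hM0 : 0 ≤ M := Finset.sum_nonneg fun i _ => by positivity
  refine ⟨1/(M+1), by positivity, fun τ hτ => ?_⟩
  have hbre : 0 ≤ (τ b).re := aux_trace_nonneg hτ hb
  set c : A := a + star a with hc
  have h1c : (1 : A) ≤ c := by
    set e : A := 1 - a with he
    have hesum : e + star e ≤ algebraMap ℝ A 1 := by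
      refine (IsSelfAdjoint.le_algebraMap_norm_self (IsSelfAdjoint.add_star_self e)).trans ?_
      rw [← sub_nonneg, ← map_sub]
      refine aux_alg_nonneg _ ?_
      have : ‖e + star e‖ ≤ 2 * ‖e‖ := by
        calc ‖e + star e‖ ≤ ‖e‖ + ‖star e‖ := norm_add_le _ _
          _ = 2 * ‖e‖ := by rw [norm_star]; ring
      have he2 : ‖e‖ < 1/2 := by rwa [he]
      linarith
    have hce : c = algebraMap ℝ A 2 - (e + star e) := by
      have : algebraMap ℝ A (2:ℝ) = (2 : A) := by
        rw [map_ofNat]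
      rw [this, hc, he]
      simp only [star_sub, star_one]
      noncomm_ring
      simp [two_smul]
      norm_num
    rw [hce]
    calc (1:A) = algebraMap ℝ A 2 - algebraMap ℝ A 1 := by
          rw [← map_sub]; norm_num
      _ ≤ algebraMap ℝ A 2 - (e + star e) := by
          exact sub_le_sub_left hesum _
  have hτc1 : 1 ≤ (τ c).re := by
    have := aux_trace_mono hτ h1c
    rwa [aux_trace_one_re hτ] at this
  have hcd : c ≤ ∑ i, (star (u i) * b * u i + star (v i) * b * v i) := by
    have hstar_a : star a = ∑ i, star (v i) * b * u i := by
      rw [ha_eq, star_sum]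
      refine Finset.sum_congr rfl fun i _ => ?_
      simp only [star_mul, star_star, hbsa]
      noncomm_ring
    rw [hc, hstar_a, ha_eq, ← Finset.sum_add_distrib]
    exact Finset.sum_le_sum fun i _ => aux_key_ineq hb (u i) (v i)
  have hsum_le : (τ (∑ i, (star (u i) * b * u i + star (v i) * b * v i))).re
      ≤ M * (τ b).re := by
    rw [map_sum, Complex.re_sum, hM, Finset.sum_mul]
    refine Finset.sum_le_sum fun i _ => ?_
    rw [map_add, Complex.add_re, add_mul]
    exact add_le_add (aux_trace_conj_le hτ hb (u i)) (aux_trace_conj_le hτ hb (v i))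
  have hfin : 1 ≤ (M+1) * (τ b).re := by
    have h2 := (aux_trace_mono hτ hcd).trans hsum_le
    nlinarith
  rw [div_le_iff₀ (by positivity)]
  linarith

lemma aux_ball_bound {X : Type*} [MetricSpace X] [CompactSpace X] [MeasurableSpace X]
    [BorelSpace X] [Nonempty X] (hA : IsSimpleCStarAlgebra A)
    (φ : C(X, ℂ) →⋆ₐ[ℂ] A) (hinj : Function.Injective φ)
    (s : ℝ) (hs : 0 < s) :
    ∃ K : ℝ, 0 < K ∧ ∀ τ : A →ₗ[ℂ] ℂ, IsTracialState τ →
      ∀ μ : Measure X, IsProbabilityMeasure μ →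
      (∀ f : C(X, ℂ), τ (φ f) = ∫ t, f t ∂μ) →
      ∀ c : X, ENNReal.ofReal K ≤ μ (ball c s) := by
  set ρ : ℝ := s/4 with hρdef
  have hρ : 0 < ρ := by positivity
  set fR : X → X → ℝ := fun i x => max 0 (1 - dist x i / ρ) with hfR
  have hfcont : ∀ i, Continuous (fR i) := fun i =>
    continuous_const.max ((continuous_const.sub
      ((continuous_id.dist continuous_const).div_const ρ)))
  have hf01 : ∀ i x, 0 ≤ fR i x := fun i x => le_max_left _ _
  have hfle1 : ∀ i x, fR i x ≤ 1 := fun i x => by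
    apply max_le (by norm_num)
    have : 0 ≤ dist x i / ρ := by positivity
    linarith
  set h : X → C(X, ℂ) := fun i =>
    ⟨fun x => (Real.sqrt (fR i x) : ℂ),
      Complex.continuous_ofReal.comp (Real.continuous_sqrt.comp (hfcont i))⟩ with hh
  set F : X → C(X, ℂ) := fun i => star (h i) * h i with hF
  have hFval : ∀ i x, F i x = ((fR i x : ℝ) : ℂ) := by
    intro i x
    simp only [hF, ContinuousMap.mul_apply, ContinuousMap.star_apply, hh,
      ContinuousMap.coe_mk, Complex.star_def, Complex.conj_ofReal]
    rw [← Complex.ofReal_mul, Real.mul_self_sqrt (hf01 i x)]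
  have hb_pos : ∀ i, 0 ≤ φ (F i) := fun i => by
    rw [hF, map_mul, map_star]; exact star_mul_self_nonneg _
  have hb_ne : ∀ i, φ (F i) ≠ 0 := by
    intro i hzero
    have : F i = 0 := hinj (by rw [hzero, map_zero])
    have h1 : F i i = 0 := by rw [this]; rfl
    rw [hFval i i] at h1
    simp only [hfR, dist_self, zero_div, sub_zero, Complex.ofReal_eq_zero] at h1
    norm_num at h1
  obtain ⟨t, ht⟩ := isCompact_univ.elim_finite_subcover (fun i : X => ball i ρ)
    (fun i => isOpen_ball) (fun x _ => Set.mem_iUnion.mpr ⟨x, mem_ball_self hρ⟩)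
  have htne : t.Nonempty := by
    obtain ⟨x0⟩ := ‹Nonempty X›
    obtain ⟨i, hi, _⟩ := Set.mem_iUnion₂.mp (ht (Set.mem_univ x0))
    exact ⟨i, hi⟩
  choose Kf hKpos hKle using fun i : X => aux_uniform_trace_pos hA (hb_pos i) (hb_ne i)
  refine ⟨t.inf' htne Kf, (Finset.lt_inf'_iff _).mpr fun i _ => hKpos i, ?_⟩
  intro τ hτ μ hμ hrep c
  obtain ⟨i, hit, hci⟩ := Set.mem_iUnion₂.mp (ht (Set.mem_univ c))
  have hint_f : Integrable (fR i) μ :=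
    (hfcont i).integrable_of_hasCompactSupport
      (isCompact_univ.of_isClosed_subset (isClosed_tsupport _) (Set.subset_univ _))
  have hre : (τ (φ (F i))).re = ∫ x, fR i x ∂μ := by
    rw [hrep (F i)]
    rw [MeasureTheory.integral_congr_ae (Filter.Eventually.of_forall fun x => hFval i x)]
    have h0 : (∫ x, ((fR i x : ℝ) : ℂ) ∂μ) = ((∫ x, fR i x ∂μ : ℝ) : ℂ) := integral_ofReal
    rw [h0, Complex.ofReal_re]
  have hKi : Kf i ≤ ∫ x, fR i x ∂μ := by
    rw [← hre]; exact hKle i τ hτ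
  have hptle : ∀ x, fR i x ≤ Set.indicator (ball c s) (fun _ => (1:ℝ)) x := by
    intro x
    by_cases hx : x ∈ ball c s
    · rw [Set.indicator_of_mem hx]; exact hfle1 i x
    · rw [Set.indicator_of_notMem hx]
      apply max_le le_rfl
      have hxc : s ≤ dist x c := by
        simpa [ball, not_lt] using hx
      have hic : dist c i < ρ := hci
      have hxi : ρ ≤ dist x i := by
        have h3 : dist x c ≤ dist x i + dist i c := dist_triangle x i c
        rw [dist_comm i c] at h3
        rw [hρdef]; linarith
      have : 1 ≤ dist x i / ρ := (one_le_div hρ).mpr hxi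
      linarith
  have hind : Integrable (Set.indicator (ball c s) (fun _ => (1:ℝ))) μ :=
    (integrable_indicator_iff measurableSet_ball).2
      ((integrableOn_const_iff).2 (Or.inr (measure_lt_top μ _)))
  have hmono : ∫ x, fR i x ∂μ ≤ (μ (ball c s)).toReal := by
    calc ∫ x, fR i x ∂μ ≤ ∫ x, Set.indicator (ball c s) (fun _ => (1:ℝ)) x ∂μ :=
          integral_mono hint_f hind hptle
      _ = (μ (ball c s)).toReal := by
          rw [integral_indicator_const (1:ℝ) measurableSet_ball, smul_eq_mul, mul_one, measureReal_def]
  calc ENNReal.ofReal (t.inf' htne Kf) ≤ ENNReal.ofReal ((μ (ball c s)).toReal) := by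
        apply ENNReal.ofReal_le_ofReal
        exact le_trans (Finset.inf'_le Kf hit) (hKi.trans hmono)
    _ = μ (ball c s) := ENNReal.ofReal_toReal (measure_ne_top μ _)

end auxProof

theorem stmt_15 {A : Type*} [CStarAlgebra A]
    (hA : IsSimpleCStarAlgebra A) (hT : ∃ τ : A →ₗ[ℂ] ℂ, IsTracialState τ)
    {X : Type*} [MetricSpace X] [CompactSpace X] [MeasurableSpace X] [BorelSpace X]
    (φ : C(X, ℂ) →⋆ₐ[ℂ] A) (hinj : Function.Injective φ) :
    ∃ Δ : ℝ → ℝ,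
      (∀ r : ℝ, 0 < r → r < 1 → 0 < Δ r ∧ Δ r < 1) ∧
      MonotoneOn Δ (Set.Ioo (0 : ℝ) 1) ∧
      Filter.Tendsto Δ (nhdsWithin 0 (Set.Ioi 0)) (nhds 0) ∧
      ∀ τ : A →ₗ[ℂ] ℂ, IsTracialState τ →
        ∀ μ : MeasureTheory.Measure X, MeasureTheory.IsProbabilityMeasure μ →
          (∀ f : C(X, ℂ), τ (φ f) = ∫ t, f t ∂μ) →
          ∀ (c : X) (r : ℝ), 0 < r → r < 1 →
            ENNReal.ofReal (Δ r) ≤ μ (ball c r) := by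
  letI : PartialOrder A := CStarAlgebra.spectralOrder A
  haveI : StarOrderedRing A := CStarAlgebra.spectralOrderedRing A
  obtain ⟨τ0, hτ0⟩ := hT
  have h10 : (1:A) ≠ 0 := by
    intro h
    have h1 := hτ0.map_one
    rw [h, map_zero] at h1
    exact one_ne_zero h1.symm
  haveI hXne : Nonempty X := by
    by_contra hX
    rw [not_nonempty_iff] at hX
    have h0 : (1 : C(X,ℂ)) = 0 := by
      ext x
      exact (hX.false x).elim
    exact h10 (by rw [← map_one φ, h0, map_zero])
  have key : ∀ n : ℕ, ∃ K : ℝ, 0 < K ∧ ∀ τ : A →ₗ[ℂ] ℂ, IsTracialState τ →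
      ∀ μ : MeasureTheory.Measure X, MeasureTheory.IsProbabilityMeasure μ →
      (∀ f : C(X, ℂ), τ (φ f) = ∫ t, f t ∂μ) →
      ∀ c : X, ENNReal.ofReal K ≤ μ (ball c (1/((n:ℝ)+1))) := fun n =>
    aux_ball_bound hA φ hinj (1/((n:ℝ)+1)) (by positivity)
  choose Kn hKpos hKn using key
  set L : ℕ → ℝ := fun n => (Finset.range (n+1)).inf' Finset.nonempty_range_add_one Kn with hL
  have hLpos : ∀ n, 0 < L n := fun n => (Finset.lt_inf'_iff _).mpr fun i _ => hKpos i
  have hLanti : ∀ {m n : ℕ}, m ≤ n → L n ≤ L m := by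
    intro m n hmn
    exact Finset.inf'_mono Kn (Finset.range_subset_range.mpr (by omega)) Finset.nonempty_range_add_one
  set Δ : ℝ → ℝ := fun r => min r (L ⌈1/r⌉₊) with hΔ
  refine ⟨Δ, ?_, ?_, ?_, ?_⟩
  · exact fun r hr hr1 => ⟨lt_min hr (hLpos _), (min_le_left _ _).trans_lt hr1⟩
  · intro r hr r' hr' hle
    refine min_le_min hle (hLanti (Nat.ceil_le_ceil ?_))
    exact one_div_le_one_div_of_le hr.1 hle
  · apply squeeze_zero' (t₀ := nhdsWithin 0 (Set.Ioi 0))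
    · filter_upwards [self_mem_nhdsWithin] with r hr
      exact le_min (le_of_lt hr) (hLpos _).le
    · filter_upwards with r
      exact min_le_left _ _
    · exact Filter.tendsto_id.mono_left nhdsWithin_le_nhds
  · intro τ hτ μ hμ hrep c r hr hr1
    set n : ℕ := ⌈1/r⌉₊ with hn
    have hn1 : 1/r ≤ (n:ℝ) := Nat.le_ceil _
    have hrs : 1/((n:ℝ)+1) ≤ r := by
      rw [div_le_iff₀ (by positivity)]
      rw [div_le_iff₀ hr] at hn1
      nlinarith
    calc ENNReal.ofReal (Δ r) ≤ ENNReal.ofReal (Kn n) := by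
          apply ENNReal.ofReal_le_ofReal
          exact (min_le_right _ _).trans (Finset.inf'_le Kn (Finset.self_mem_range_succ n))
      _ ≤ μ (ball c (1/((n:ℝ)+1))) := hKn n τ hτ μ hμ hrep c
      _ ≤ μ (ball c r) := MeasureTheory.measure_mono (ball_subset_ball hrs)
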